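/- A finite graph G is a split graph if and only if G has no induced subgraph isomorphic to 2K2, C4, or C5. -/

import Mathlib

open SimpleGraph

/-- `G` contains an induced copy of `H`. -/
def ContainsInduced {V W : Type*} (G : SimpleGraph V) (H : SimpleGraph W) : Prop :=
  ∃ f : W ↪ V, ∀ u v, G.Adj (f u) (f v) ↔ H.Adj u v

/-- The path on 5 vertices. -/
def path5 : SimpleGraph (Fin 5) :=
  SimpleGraph.fromRel (fun i j => (i : ℕ) + 1 = (j : ℕ))

/-- Two disjoint edges. -/
def twoK2 : SimpleGraph (Fin 4) :=
  SimpleGraph.fromRel (fun i j => (i = 0 ∧ j = 1) ∨ (i = 2 ∧ j = 3))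

/-- The cycle on `n` vertices (for `n ≥ 3`). -/
def cycG (n : ℕ) : SimpleGraph (Fin n) :=
  SimpleGraph.fromRel (fun i j => ((i : ℕ) + 1) % n = (j : ℕ))

/-- `G` contains an induced wheel: an induced (chordless) cycle of length at least 4
plus a vertex with at least three neighbors on the cycle. -/
def ContainsWheel {V : Type*} (G : SimpleGraph V) : Prop :=
  ∃ n : ℕ, 4 ≤ n ∧ ∃ (f : Fin n ↪ V) (hub : V),
    (∀ i, hub ≠ f i) ∧
    (∀ i j, G.Adj (f i) (f j) ↔ (cycG n).Adj i j) ∧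
    3 ≤ {i : Fin n | G.Adj hub (f i)}.ncard

/-- `G` contains an induced wheel on at most `k` vertices. -/
def ContainsWheelLE {V : Type*} (G : SimpleGraph V) (k : ℕ) : Prop :=
  ∃ n : ℕ, 4 ≤ n ∧ n + 1 ≤ k ∧ ∃ (f : Fin n ↪ V) (hub : V),
    (∀ i, hub ≠ f i) ∧
    (∀ i j, G.Adj (f i) (f j) ↔ (cycG n).Adj i j) ∧
    3 ≤ {i : Fin n | G.Adj hub (f i)}.ncard

/-- `s` is the vertex set of a hole (induced cycle of length at least 4) of `G`. -/
def IsHoleSet {V : Type*} (G : SimpleGraph V) (s : Set V) : Prop :=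
  ∃ n : ℕ, 4 ≤ n ∧ ∃ f : Fin n ↪ V, Set.range f = s ∧
    ∀ i j, G.Adj (f i) (f j) ↔ (cycG n).Adj i j

/-- `G` is a split graph: its vertex set partitions into a stable set and a clique. -/
def IsSplit {V : Type*} (G : SimpleGraph V) : Prop :=
  ∃ S K : Set V, (∀ v, v ∈ S ∨ v ∈ K) ∧ S ∩ K = ∅ ∧
    (∀ u ∈ S, ∀ v ∈ S, ¬G.Adj u v) ∧ G.IsClique K

set_option linter.unreachableTactic false
set_option linter.unusedTactic false

lemma mk2K2 {V : Type*} (G : SimpleGraph V) (a b c d : V)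
    (hab : G.Adj a b) (hcd : G.Adj c d)
    (hac : ¬G.Adj a c) (had : ¬G.Adj a d) (hbc : ¬G.Adj b c) (hbd : ¬G.Adj b d) :
    ContainsInduced G twoK2 := by
  have hba := hab.symm
  have hdc := hcd.symm
  have hca : ¬G.Adj c a := fun h => hac h.symm
  have hda : ¬G.Adj d a := fun h => had h.symm
  have hcb : ¬G.Adj c b := fun h => hbc h.symm
  have hdb : ¬G.Adj d b := fun h => hbd h.symm
  have h0 : a ≠ b := hab.ne
  have h5 : c ≠ d := hcd.ne
  have h1 : a ≠ c := by rintro rfl; exact had hcd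
  have h2 : a ≠ d := by rintro rfl; exact hac hcd.symm
  have h3 : b ≠ c := by rintro rfl; exact hbd hcd
  have h4 : b ≠ d := by rintro rfl; exact hbc hcd.symm
  refine ⟨⟨![a,b,c,d], ?_⟩, ?_⟩
  · intro i j hij
    fin_cases i <;> fin_cases j <;> simp_all
  · intro u v
    fin_cases u <;> fin_cases v <;>
      simp_all [twoK2, SimpleGraph.fromRel_adj] <;> assumption

lemma mkC4 {V : Type*} (G : SimpleGraph V) (a b c d : V)
    (hab : G.Adj a b) (hbc : G.Adj b c) (hcd : G.Adj c d) (hda : G.Adj d a)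
    (hac : ¬G.Adj a c) (hbd : ¬G.Adj b d) (h1 : a ≠ c) (h2 : b ≠ d) :
    ContainsInduced G (cycG 4) := by
  have hba := hab.symm
  have hcb := hbc.symm
  have hdc := hcd.symm
  have had := hda.symm
  have hca : ¬G.Adj c a := fun h => hac h.symm
  have hdb : ¬G.Adj d b := fun h => hbd h.symm
  have h0 : a ≠ b := hab.ne
  have h5 : c ≠ d := hcd.ne
  have h6 : b ≠ c := hbc.ne
  have h7 : d ≠ a := hda.ne
  refine ⟨⟨![a,b,c,d], ?_⟩, ?_⟩
  · intro i j hij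
    fin_cases i <;> fin_cases j <;> simp_all
  · intro u v
    fin_cases u <;> fin_cases v <;>
      simp_all [cycG, SimpleGraph.fromRel_adj] <;> assumption

lemma mkC5 {V : Type*} (G : SimpleGraph V) (a b c d e : V)
    (hab : G.Adj a b) (hbc : G.Adj b c) (hcd : G.Adj c d) (hde : G.Adj d e)
    (hea : G.Adj e a)
    (hac : ¬G.Adj a c) (had : ¬G.Adj a d) (hbd : ¬G.Adj b d) (hbe : ¬G.Adj b e)
    (hce : ¬G.Adj c e) :
    ContainsInduced G (cycG 5) := by
  have hba := hab.symm
  have hcb := hbc.symm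
  have hdc := hcd.symm
  have hed := hde.symm
  have hae := hea.symm
  have hca : ¬G.Adj c a := fun h => hac h.symm
  have hda : ¬G.Adj d a := fun h => had h.symm
  have hdb : ¬G.Adj d b := fun h => hbd h.symm
  have heb : ¬G.Adj e b := fun h => hbe h.symm
  have hec : ¬G.Adj e c := fun h => hce h.symm
  have h0 : a ≠ b := hab.ne
  have h1 : b ≠ c := hbc.ne
  have h2 : c ≠ d := hcd.ne
  have h3 : d ≠ e := hde.ne
  have h4 : e ≠ a := hea.ne
  have h5 : a ≠ c := by rintro rfl; exact had hcd
  have h6 : a ≠ d := by rintro rfl; exact hac hcd.symm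
  have h7 : b ≠ d := by rintro rfl; exact hbe hde
  have h8 : b ≠ e := by rintro rfl; exact hbd hde.symm
  have h9 : c ≠ e := by rintro rfl; exact hbe hbc
  refine ⟨⟨![a,b,c,d,e], ?_⟩, ?_⟩
  · intro i j hij
    fin_cases i <;> fin_cases j <;> simp_all
  · intro u v
    fin_cases u <;> fin_cases v <;>
      simp_all [cycG, SimpleGraph.fromRel_adj] <;> assumption

instance : DecidableRel twoK2.Adj := fun a b =>
  decidable_of_iff _ (SimpleGraph.fromRel_adj _ a b).symm
instance (n : ℕ) : DecidableRel (cycG n).Adj := fun a b =>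
  decidable_of_iff _ (SimpleGraph.fromRel_adj _ a b).symm

def splitB {n : ℕ} (G : SimpleGraph (Fin n)) [DecidableRel G.Adj] (p : Fin n → Bool) : Prop :=
  (∀ u v, p u = true → p v = true → ¬G.Adj u v) ∧
  (∀ u v, p u = false → p v = false → u ≠ v → G.Adj u v)

instance {n : ℕ} (G : SimpleGraph (Fin n)) [DecidableRel G.Adj] (p : Fin n → Bool) :
    Decidable (splitB G p) := by unfold splitB; infer_instance

lemma not_isSplit_of_bool {n : ℕ} (G : SimpleGraph (Fin n)) [DecidableRel G.Adj]
    (h : ∀ p : Fin n → Bool, ¬splitB G p) : ¬ IsSplit G := by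
  classical
  rintro ⟨S, K, hcov, hdisj, hstab, hcl⟩
  refine h (fun v => if v ∈ S then true else false) ⟨?_, ?_⟩
  · intro u v hu hv
    by_cases h1 : u ∈ S <;> by_cases h2 : v ∈ S <;>
      simp_all <;> exact hstab u h1 v h2
  · intro u v hu hv huv
    by_cases h1 : u ∈ S <;> by_cases h2 : v ∈ S <;> simp_all
    have hu' : u ∈ K := (hcov u).resolve_left h1
    have hv' : v ∈ K := (hcov v).resolve_left h2
    exact hcl hu' hv' huv

lemma isSplit_induced {V W : Type*} {G : SimpleGraph V} {H : SimpleGraph W}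
    (h : ContainsInduced G H) (hG : IsSplit G) : IsSplit H := by
  obtain ⟨f, hf⟩ := h
  obtain ⟨S, K, hcov, hdisj, hstab, hcl⟩ := hG
  refine ⟨f ⁻¹' S, f ⁻¹' K, fun v => hcov (f v), ?_, ?_, ?_⟩
  · rw [← Set.preimage_inter, hdisj, Set.preimage_empty]
  · intro u hu v hv hadj
    exact hstab (f u) hu (f v) hv ((hf u v).mpr hadj)
  · intro u hu v hv huv
    exact (hf u v).mp (hcl hu hv (fun h => huv (f.injective h)))

lemma not_split_twoK2 : ¬ IsSplit twoK2 :=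
  not_isSplit_of_bool _ (by decide)
lemma not_split_C4 : ¬ IsSplit (cycG 4) :=
  not_isSplit_of_bool _ (by decide)
lemma not_split_C5 : ¬ IsSplit (cycG 5) :=
  not_isSplit_of_bool _ (by decide)

lemma backward_aux {V : Type*} [Fintype V] (G : SimpleGraph V)
    (h2 : ¬ContainsInduced G twoK2) (h4 : ¬ContainsInduced G (cycG 4))
    (h5 : ¬ContainsInduced G (cycG 5)) : IsSplit G := by
  classical
  set f : Finset V → ℕ :=
    fun L => {p : V × V | p.1 ∉ L ∧ p.2 ∉ L ∧ G.Adj p.1 p.2}.ncard with hf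
  obtain ⟨K₀, hK₀mem, hK₀max⟩ :=
    Finset.exists_max_image (Finset.univ.filter (fun K : Finset V => G.IsClique ↑K))
      Finset.card ⟨∅, by simp⟩
  obtain ⟨K, hKmem, hKmin⟩ :=
    Finset.exists_min_image
      ((Finset.univ.filter (fun K : Finset V => G.IsClique ↑K)).filter
        (fun K => K.card = K₀.card)) f ⟨K₀, by simp [hK₀mem]⟩
  simp only [Finset.mem_filter, Finset.mem_univ, true_and] at hKmem
  obtain ⟨hKcl, hKcard⟩ := hKmem
  have hmax : ∀ L : Finset V, G.IsClique ↑L → L.card ≤ K.card := by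
    intro L hL
    rw [hKcard]
    exact hK₀max L (by simp [hL])
  have hmin : ∀ L : Finset V, G.IsClique ↑L → L.card = K.card → f K ≤ f L := by
    intro L hL hc
    exact hKmin L (by simp [hL, hc ▸ hKcard])
  have hnonnbr : ∀ v, v ∉ K → ∃ u ∈ K, ¬ G.Adj v u := by
    intro v hv
    by_contra hcon
    push_neg at hcon
    have hcl : G.IsClique ↑(insert v K) := by
      rw [Finset.coe_insert]
      exact hKcl.insert (fun b hb _ => hcon b hb)
    have := hmax _ hcl
    rw [Finset.card_insert_of_notMem hv] at this
    omega
  -- main key lemma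
  have key : ∀ x y : V, x ∉ K → y ∉ K → G.Adj x y →
      (∀ u ∈ K, G.Adj u y → G.Adj u x) →
      ∀ w ∈ K, G.Adj w x → ¬G.Adj w y → False := by
    intro x y hx hy hxy hcomp w hwK hwx hwy
    obtain ⟨z, hzK, hxz⟩ := hnonnbr x hx
    have hzx : ¬ G.Adj z x := fun h => hxz h.symm
    have hzy : ¬ G.Adj z y := fun h => hzx (hcomp z hzK h)
    have hyne : y ≠ z := fun h => hzx (h ▸ hxy.symm)
    have hwz : w ≠ z := fun h => hzx (h ▸ hwx)
    have huniq : ∀ u ∈ K, u ≠ z → G.Adj u x := by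
      intro u huK hune
      by_contra hux
      have huy : ¬G.Adj u y := fun h => hux (hcomp u huK h)
      exact h2 (mk2K2 G x y u z hxy (hKcl huK hzK hune)
        (fun h => hux h.symm) hxz (fun h => huy h.symm) (fun h => hzy h.symm))
    have hsub : ∀ c, c ∉ K → c ≠ x → G.Adj z c → G.Adj x c := by
      intro c hcK hcx hzc
      by_contra hxc
      by_cases hyc : G.Adj y c
      · by_cases hwc : G.Adj w c
        · -- C4 on w c y x
          have hcy : c ∉ (K : Set V) := hcK
          exact h4 (mkC4 G w c y x hwc hyc.symm hxy.symm hwx.symm hwy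
            (fun h => hxc h.symm) (fun h : w = y => hy (h ▸ hwK)) (fun h : c = x => hcx h))
        · -- C5 on x y c z w
          exact h5 (mkC5 G x y c z w hxy hyc hzc.symm (hKcl hzK hwK (Ne.symm hwz)) hwx
            hxc hxz (fun h => hzy h.symm) (fun h => hwy h.symm) (fun h => hwc h.symm))
      · -- 2K2 on z c x y
        exact h2 (mk2K2 G z c x y hzc hxy hzx hzy (fun h => hxc h.symm) (fun h => hyc h.symm))
    -- the improved clique
    set K' := insert x (K.erase z) with hK'
    have hxKe : x ∉ K.erase z := fun h => hx (Finset.mem_of_mem_erase h)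
    have hK'cl : G.IsClique ↑K' := by
      rw [hK', Finset.coe_insert]
      refine (hKcl.subset ?_).insert ?_
      · exact_mod_cast Finset.erase_subset z K
      · intro b hb _
        have hb' : b ∈ K.erase z := hb
        exact (huniq b (Finset.mem_of_mem_erase hb') (Finset.ne_of_mem_erase hb')).symm
    have hK'card : K'.card = K.card := by
      rw [hK', Finset.card_insert_of_notMem hxKe, Finset.card_erase_of_mem hzK]
      have : 0 < K.card := Finset.card_pos.mpr ⟨z, hzK⟩
      omega
    have hle := hmin K' hK'cl hK'card
    -- show f K' < f K
    have hmemK' : ∀ a : V, a ∉ K' → a ≠ x ∧ (a ∉ K ∨ a = z) := by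
      intro a ha
      constructor
      · exact fun h => ha (by rw [h]; exact Finset.mem_insert_self x _)
      · by_cases haz : a = z
        · exact Or.inr haz
        · refine Or.inl fun haK => ha ?_
          exact Finset.mem_insert_of_mem (Finset.mem_erase.mpr ⟨haz, haK⟩)
    have hzxne : z ≠ x := fun h => hx (h ▸ hzK)
    have hzK' : z ∉ K' := by
      intro h
      rcases Finset.mem_insert.mp h with h | h
      · exact hzxne h
      · exact absurd rfl (Finset.ne_of_mem_erase h)
    let σ : V ≃ V := Equiv.swap x z
    have hσmem : ∀ a : V, a ∉ K' → σ a ∉ K := by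
      intro a ha
      obtain ⟨hax, haK⟩ := hmemK' a ha
      rcases haK with haK | rfl
      · have haz : a ≠ z := fun h => (hmemK' a ha).2.elim (fun h' => h' (h ▸ hzK)) (fun _ => haK (h ▸ hzK))
        rwa [Equiv.swap_apply_of_ne_of_ne hax haz]
      · rw [Equiv.swap_apply_right]; exact hx
    have hσadj : ∀ a b : V, a ∉ K' → b ∉ K' → G.Adj a b → G.Adj (σ a) (σ b) := by
      intro a b ha hb hadj
      by_cases haz : a = z <;> by_cases hbz : b = z
      · subst haz; subst hbz; exact absurd hadj (G.irrefl)
      · subst haz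
        rw [Equiv.swap_apply_right,
          Equiv.swap_apply_of_ne_of_ne (hmemK' b hb).1 hbz]
        have hbK : b ∉ K := (hmemK' b hb).2.resolve_right hbz
        exact hsub b hbK (hmemK' b hb).1 hadj
      · subst hbz
        rw [Equiv.swap_apply_right,
          Equiv.swap_apply_of_ne_of_ne (hmemK' a ha).1 haz]
        have haK : a ∉ K := (hmemK' a ha).2.resolve_right haz
        exact (hsub a haK (hmemK' a ha).1 hadj.symm).symm
      · rw [Equiv.swap_apply_of_ne_of_ne (hmemK' a ha).1 haz,
          Equiv.swap_apply_of_ne_of_ne (hmemK' b hb).1 hbz]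
        exact hadj
    have hlt : {p : V × V | p.1 ∉ K' ∧ p.2 ∉ K' ∧ G.Adj p.1 p.2}.ncard <
        {p : V × V | p.1 ∉ K ∧ p.2 ∉ K ∧ G.Adj p.1 p.2}.ncard := by
      have hinj : Function.Injective (fun p : V × V => (σ p.1, σ p.2)) := by
        intro p q h
        simp only [Prod.mk.injEq] at h
        exact Prod.ext (σ.injective h.1) (σ.injective h.2)
      rw [← Set.ncard_image_of_injective
        {p : V × V | p.1 ∉ K' ∧ p.2 ∉ K' ∧ G.Adj p.1 p.2} hinj]
      refine Set.ncard_lt_ncard ?_ (Set.toFinite _)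
      rw [Set.ssubset_iff_of_subset]
      · refine ⟨(x, y), ⟨hx, hy, hxy⟩, ?_⟩
        rintro ⟨⟨a, b⟩, ⟨ha, hb, hadj⟩, heq⟩
        simp only [Prod.mk.injEq] at heq
        have ha' : a = z := by
          have h1 : σ (σ a) = σ x := congrArg σ heq.1
          rwa [Equiv.swap_apply_self, Equiv.swap_apply_left] at h1
        have hb' : b = y := by
          have h1 : σ (σ b) = σ y := congrArg σ heq.2
          rwa [Equiv.swap_apply_self,
            Equiv.swap_apply_of_ne_of_ne hxy.ne' hyne] at h1
        exact hzy (ha' ▸ hb' ▸ hadj)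
      · rintro _ ⟨⟨a, b⟩, ⟨ha, hb, hadj⟩, rfl⟩
        exact ⟨hσmem a ha, hσmem b hb, hσadj a b ha hb hadj⟩
    have hle' : {p : V × V | p.1 ∉ K ∧ p.2 ∉ K ∧ G.Adj p.1 p.2}.ncard ≤
        {p : V × V | p.1 ∉ K' ∧ p.2 ∉ K' ∧ G.Adj p.1 p.2}.ncard := hle
    omega
  -- stability of the complement
  have stable : ∀ x y : V, x ∉ K → y ∉ K → ¬ G.Adj x y := by
    intro x y hx hy hxy
    by_cases c1 : ∃ w ∈ K, G.Adj w x ∧ ¬G.Adj w y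
    · obtain ⟨w, hwK, hwx, hwy⟩ := c1
      have hcomp : ∀ u ∈ K, G.Adj u y → G.Adj u x := by
        intro u huK huy
        by_contra hux
        have hwu : w ≠ u := fun h => hux (h ▸ hwx)
        -- C4 on x w u y
        exact h4 (mkC4 G x w u y hwx.symm (hKcl hwK huK hwu) huy hxy.symm
          (fun h => hux h.symm) hwy
          (fun h : x = u => hx (h ▸ huK))
          (fun h : w = y => hy (h ▸ hwK)))
      exact key x y hx hy hxy hcomp w hwK hwx hwy
    · by_cases c2 : ∃ w ∈ K, G.Adj w y ∧ ¬G.Adj w x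
      · obtain ⟨w, hwK, hwy, hwx⟩ := c2
        have hcomp : ∀ u ∈ K, G.Adj u x → G.Adj u y := by
          intro u huK hux
          by_contra huy
          exact c1 ⟨u, huK, hux, huy⟩
        exact key y x hy hx hxy.symm hcomp w hwK hwy hwx
      · push_neg at c1 c2
        obtain ⟨z, hzK, hxz⟩ := hnonnbr x hx
        have hzx : ¬ G.Adj z x := fun h => hxz h.symm
        have hzy : ¬ G.Adj z y := fun h => hzx (c2 z hzK h)
        have hboth : ∀ u ∈ K, u ≠ z → G.Adj u x ∧ G.Adj u y := by
          intro u huK hune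
          by_cases hux : G.Adj u x
          · exact ⟨hux, c1 u huK hux⟩
          · have huy : ¬G.Adj u y := fun h => hux (c2 u huK h)
            exact absurd (mk2K2 G x y u z hxy (hKcl huK hzK hune)
              (fun h => hux h.symm) hxz (fun h => huy h.symm)
              (fun h => hzy h.symm)) h2
        have hxyne : x ≠ y := hxy.ne
        have hyK : y ∉ insert x (K.erase z) → True := fun _ => trivial
        have hxmem : x ∉ insert y (K.erase z) := by
          intro h
          rcases Finset.mem_insert.mp h with h | h
          · exact hxyne h
          · exact hx (Finset.mem_of_mem_erase h)
        have hymem : y ∉ K.erase z := fun h => hy (Finset.mem_of_mem_erase h)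
        have hcl : G.IsClique ↑(insert x (insert y (K.erase z))) := by
          rw [Finset.coe_insert, Finset.coe_insert]
          refine ((hKcl.subset ?_).insert ?_).insert ?_
          · exact_mod_cast Finset.erase_subset z K
          · intro b hb _
            have hb' : b ∈ K.erase z := hb
            exact (hboth b (Finset.mem_of_mem_erase hb')
              (Finset.ne_of_mem_erase hb')).2.symm
          · intro b hb hbx
            rcases hb with hb | hb
            · exact hb ▸ hxy
            · have hb' : b ∈ K.erase z := hb
              exact (hboth b (Finset.mem_of_mem_erase hb')
                (Finset.ne_of_mem_erase hb')).1.symm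
        have hcard := hmax _ hcl
        rw [Finset.card_insert_of_notMem hxmem,
          Finset.card_insert_of_notMem hymem,
          Finset.card_erase_of_mem hzK] at hcard
        have : 0 < K.card := Finset.card_pos.mpr ⟨z, hzK⟩
        omega
  refine ⟨{v : V | v ∉ K}, ↑K, fun v => ?_, ?_, ?_, hKcl⟩
  · by_cases h : v ∈ K
    · exact Or.inr h
    · exact Or.inl h
  · ext v; simp
  · intro u hu v hv
    exact stable u v hu hv


theorem stmt_4 {V : Type*} [Fintype V] (G : SimpleGraph V) :
    IsSplit G ↔
      ¬ContainsInduced G twoK2 ∧ ¬ContainsInduced G (cycG 4) ∧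
        ¬ContainsInduced G (cycG 5) := by
  constructor
  · intro hG
    exact ⟨fun h => not_split_twoK2 (isSplit_induced h hG),
      fun h => not_split_C4 (isSplit_induced h hG),
      fun h => not_split_C5 (isSplit_induced h hG)⟩
  · rintro ⟨h2, h4, h5⟩
    exact backward_aux G h2 h4 h5
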